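/- Lower semicontinuity of the centered maximal operator under weak convergence: let μ be a Borel measure on a metric space X with all closed balls of finite measure, and let ν_n be finite Borel measures converging weakly to a finite Borel measure ν. Then for every x in the support of μ, liminf_{n→∞} M^c_μ ν_n(x) ≥ M^c_μ ν(x), where M^c_μ ν(x) = sup_{r>0} ν(B(x,r))/μ(B(x,r)) (with the convention 0 when μ(B(x,r))=0). -/

import Mathlib

open MeasureTheory Metric ENNReal Filter Topology

/-- A set is a (nondegenerate) closed ball. -/
def IsClosedBall {X : Type*} [MetricSpace X] (B : Set X) : Prop :=
  ∃ (c : X) (r : ℝ), 0 < r ∧ B = Metric.closedBall c r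

/-- The support of a measure: points all of whose neighborhoods have positive measure. -/
def suppM {X : Type*} [MetricSpace X] [MeasurableSpace X] (μ : Measure X) : Set X :=
  {x | ∀ r > (0 : ℝ), 0 < μ (Metric.ball x r)}

/-- Average of `f` over a set, declared `0` when the set is `μ`-null. -/
noncomputable def avg {X : Type*} [MetricSpace X] [MeasurableSpace X]
    (μ : Measure X) (f : X → ℝ≥0∞) (B : Set X) : ℝ≥0∞ :=
  if μ B = 0 then 0 else (∫⁻ y in B, f y ∂μ) / μ B

/-- Centered Hardy–Littlewood maximal function. -/
noncomputable def Mc {X : Type*} [MetricSpace X] [MeasurableSpace X]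
    (μ : Measure X) (f : X → ℝ≥0∞) (x : X) : ℝ≥0∞ :=
  ⨆ r > (0 : ℝ), avg μ f (Metric.closedBall x r)

/-- Non-centered Hardy–Littlewood maximal function. -/
noncomputable def Munc {X : Type*} [MetricSpace X] [MeasurableSpace X]
    (μ : Measure X) (f : X → ℝ≥0∞) (x : X) : ℝ≥0∞ :=
  ⨆ B ∈ {B : Set X | IsClosedBall B ∧ x ∈ B}, avg μ f B

/-- Ratio of measures with the convention `0` when the denominator vanishes. -/
noncomputable def ratio0 {X : Type*} [MeasurableSpace X] (μ ν : MeasureTheory.Measure X) (B : Set X) : ℝ≥0∞ :=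
  if μ B = 0 then 0 else ν B / μ B

/-- Centered maximal function of a measure `ν` with respect to `μ`. -/
noncomputable def McMeas {X : Type*} [MetricSpace X] [MeasurableSpace X]
    (μ ν : Measure X) (x : X) : ℝ≥0∞ :=
  ⨆ r > (0 : ℝ), ratio0 μ ν (Metric.closedBall x r)

/-- Non-centered maximal function of a measure `ν` with respect to `μ`. -/
noncomputable def MuncMeas {X : Type*} [MetricSpace X] [MeasurableSpace X]
    (μ ν : Measure X) (x : X) : ℝ≥0∞ :=
  ⨆ B ∈ {B : Set X | IsClosedBall B ∧ x ∈ B}, ratio0 μ ν B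

/-- Portmanteau: weak convergence of finite measures gives the liminf inequality on open sets. -/
lemma open_liminf_aux {X : Type*} [MetricSpace X] [MeasurableSpace X] [BorelSpace X]
    (ν : ℕ → Measure X) (νlim : Measure X)
    [∀ n, IsFiniteMeasure (ν n)] [IsFiniteMeasure νlim]
    (hweak : ∀ g : BoundedContinuousFunction X ℝ,
      Tendsto (fun n => ∫ z, g z ∂(ν n)) atTop (nhds (∫ z, g z ∂νlim)))
    (G : Set X) (hG : IsOpen G) :
    νlim G ≤ liminf (fun n => ν n G) atTop := by
  set νF : ℕ → FiniteMeasure X := fun n => ⟨ν n, inferInstance⟩ with hνF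
  set νlimF : FiniteMeasure X := ⟨νlim, inferInstance⟩ with hνlimF
  have htend : Tendsto νF atTop (𝓝 νlimF) := by
    apply FiniteMeasure.tendsto_iff_forall_integral_tendsto.mpr
    intro f
    exact hweak f
  have hclosed : limsup (fun n => ν n Gᶜ) atTop ≤ νlim Gᶜ :=
    FiniteMeasure.limsup_measure_closed_le_of_tendsto htend hG.isClosed_compl
  have hmass : Tendsto (fun n => ν n Set.univ) atTop (𝓝 (νlim Set.univ)) := by
    have h1 : Tendsto (fun n => (νF n).mass) atTop (𝓝 νlimF.mass) := htend.mass
    have h2 := (ENNReal.continuous_coe.tendsto _).comp h1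
    have e1 : (ENNReal.ofNNReal ∘ fun n => (νF n).mass) = fun n => ν n Set.univ := by
      funext n; exact FiniteMeasure.ennreal_mass
    have e2 : ((νlimF.mass : ℝ≥0∞)) = νlim Set.univ := FiniteMeasure.ennreal_mass
    rw [e1, e2] at h2
    exact h2
  rw [le_liminf_iff]
  intro c hc
  have hcT : c ≠ ∞ := (hc.trans (measure_lt_top _ _)).ne
  obtain ⟨ε, hε0, hε⟩ := ENNReal.lt_iff_exists_add_pos_lt.1 hc
  set δ : ℝ≥0∞ := (ε : ℝ≥0∞) / 2 with hδ
  have hδ0 : δ ≠ 0 := by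
    simp [hδ, ENNReal.div_eq_zero_iff, hε0.ne']
  have hδT : δ ≠ ∞ := by
    rw [hδ]
    exact (ENNReal.div_lt_top ENNReal.coe_ne_top (by norm_num)).ne
  have hδδ : δ + δ = (ε : ℝ≥0∞) := ENNReal.add_halves _
  have hm0 : νlim Set.univ ≠ 0 := by
    intro h
    have : νlim G ≤ 0 := by
      rw [← h]; exact measure_mono (Set.subset_univ G)
    exact absurd (hc.trans_le this) (by simp)
  have ev1 : ∀ᶠ n in atTop, νlim Set.univ - δ < ν n Set.univ :=
    hmass.eventually_const_lt (ENNReal.sub_lt_self (measure_ne_top _ _) hm0 hδ0)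
  have ev2 : ∀ᶠ n in atTop, ν n Gᶜ < νlim Gᶜ + δ :=
    eventually_lt_of_limsup_lt (hclosed.trans_lt (ENNReal.lt_add_right (measure_ne_top _ _) hδ0))
  filter_upwards [ev1, ev2] with n h1 h2
  have hadd : ν n G + ν n Gᶜ = ν n Set.univ := measure_add_measure_compl hG.measurableSet
  have haddlim : νlim G + νlim Gᶜ = νlim Set.univ := measure_add_measure_compl hG.measurableSet
  rw [← ENNReal.add_lt_add_iff_right (measure_ne_top (ν n) Gᶜ), hadd]
  calc c + ν n Gᶜ < c + (νlim Gᶜ + δ) := ENNReal.add_lt_add_left hcT h2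
    _ ≤ νlim Set.univ - δ := by
        refine ENNReal.le_sub_of_add_le_right hδT ?_
        have : c + (νlim Gᶜ + δ) + δ = (c + (ε : ℝ≥0∞)) + νlim Gᶜ := by
          rw [← hδδ]; ring
        rw [this, ← haddlim]
        exact add_le_add hε.le le_rfl
    _ < ν n Set.univ := h1

/-- Lower semicontinuity of the centered maximal operator under weak convergence. -/
theorem liminf_centered_maximal {X : Type*} [MetricSpace X] [MeasurableSpace X] [BorelSpace X]
    (μ : Measure X) (hfin : ∀ (c : X) (r : ℝ), μ (closedBall c r) ≠ ∞)
    (hsupp : (suppM μ).Nonempty)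
    (ν : ℕ → Measure X) (νlim : Measure X)
    [∀ n, IsFiniteMeasure (ν n)] [IsFiniteMeasure νlim]
    (hweak : ∀ g : BoundedContinuousFunction X ℝ,
      Tendsto (fun n => ∫ z, g z ∂(ν n)) atTop (nhds (∫ z, g z ∂νlim)))
    (x : X) (hx : x ∈ suppM μ) :
    McMeas μ νlim x ≤ liminf (fun n => McMeas μ (ν n) x) atTop := by
  set L := liminf (fun n => McMeas μ (ν n) x) atTop with hL
  have hopen := fun (G : Set X) (hG : IsOpen G) => open_liminf_aux ν νlim hweak G hG
  have hpos : ∀ r : ℝ, 0 < r → μ (closedBall x r) ≠ 0 := fun r hr =>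
    ((hx r hr).trans_le (measure_mono ball_subset_closedBall)).ne'
  rw [McMeas]
  refine iSup₂_le fun r hr => ?_
  rw [ratio0, if_neg (hpos r hr)]
  set B := closedBall x r with hB
  -- key estimate for larger radii
  have key : ∀ s : ℝ, r < s → νlim B / μ (closedBall x s) ≤ L := by
    intro s hs
    have hs0 : 0 < s := hr.trans hs
    set c := μ (closedBall x s) with hc
    have hc0 : c ≠ 0 := hpos s hs0
    have h1 : νlim B ≤ νlim (ball x s) := measure_mono (closedBall_subset_ball hs)
    have h2 : νlim (ball x s) ≤ liminf (fun n => ν n (ball x s)) atTop := hopen _ isOpen_ball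
    calc νlim B / c ≤ (liminf (fun n => ν n (ball x s)) atTop) * c⁻¹ := by
          rw [div_eq_mul_inv]; exact mul_le_mul_left (h1.trans h2) _
      _ ≤ liminf (fun n => ν n (ball x s) * c⁻¹) atTop := by
          have h := ENNReal.le_liminf_mul (f := atTop)
            (u := fun n => ν n (ball x s)) (v := fun _ => c⁻¹)
          simpa [liminf_const, Pi.mul_def] using h
      _ ≤ L := by
          refine liminf_le_liminf (Eventually.of_forall fun n => ?_)
          have hstep : ν n (ball x s) * c⁻¹ ≤ ratio0 μ (ν n) (closedBall x s) := by
            rw [ratio0, if_neg hc0, div_eq_mul_inv]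
            exact mul_le_mul_left (measure_mono ball_subset_closedBall) _
          refine hstep.trans ?_
          rw [McMeas]
          exact le_iSup₂ (f := fun t (_ : t > (0:ℝ)) => ratio0 μ (ν n) (closedBall x t)) s hs0
  -- shrink the radius: μ (closedBall x (r + 1/(k+1))) → μ B
  have hAnti : Antitone (fun k : ℕ => closedBall x (r + 1 / (k + 1 : ℝ))) := by
    intro k l hkl
    apply closedBall_subset_closedBall
    have : (1 : ℝ) / (l + 1) ≤ 1 / (k + 1) :=
      one_div_le_one_div_of_le (by positivity) (by exact_mod_cast Nat.add_le_add_right hkl 1)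
    linarith
  have hInter : (⋂ k : ℕ, closedBall x (r + 1 / (k + 1 : ℝ))) = B := by
    ext y
    simp only [Set.mem_iInter, mem_closedBall, hB]
    constructor
    · intro h
      refine le_of_forall_pos_le_add fun ε hε => ?_
      obtain ⟨k, hk⟩ := exists_nat_one_div_lt hε
      exact (h k).trans (by linarith [hk])
    · intro h k
      have : (0:ℝ) < 1 / (k + 1 : ℝ) := by positivity
      linarith
  have hmeas : Tendsto (fun k : ℕ => μ (closedBall x (r + 1 / (k + 1 : ℝ)))) atTop (𝓝 (μ B)) := by
    have := tendsto_measure_iInter_atTop (μ := μ)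
      (s := fun k : ℕ => closedBall x (r + 1 / (k + 1 : ℝ)))
      (fun k => measurableSet_closedBall.nullMeasurableSet) hAnti ⟨0, hfin x _⟩
    rw [hInter] at this
    exact this
  have htendsdiv : Tendsto (fun k : ℕ => νlim B / μ (closedBall x (r + 1 / (k + 1 : ℝ)))) atTop
      (𝓝 (νlim B / μ B)) := by
    simp only [div_eq_mul_inv]
    exact ENNReal.Tendsto.const_mul hmeas.inv
      (Or.inr (measure_ne_top νlim B))
  refine le_of_tendsto htendsdiv (Eventually.of_forall fun k => key _ ?_)
  have : (0:ℝ) < 1 / (k + 1 : ℝ) := by positivity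
  linarith
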